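/- Let Φ be a linear map between finite direct sums of normed spaces satisfying the RIP of order 2k with constant δ_{2k} < 1: for all k-sparse u, v, (1−δ_{2k})‖u−v‖₂² ≤ ‖Φ(u)−Φ(v)‖₂² and ‖Φ(u)+Φ(v)‖₂² ≤ (1+δ_{2k})‖u+v‖₂² (norms taken on component-norm vectors). Then for any u, v that are k-sparse with disjoint supports and unit ℓ²-component-norm, the inner product of the component-norm vectors of Φ(u) and Φ(v) satisfies ⟨|Φ(u)|, |Φ(v)|⟩ ≤ δ_{2k}·‖u‖₂·‖v‖₂. -/
import Mathlib


open Finset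

/-- A vector of `ℝ^N` is `k`-sparse if it has at most `k` nonzero components. -/
def IsKSparse {N : ℕ} (k : ℕ) (u : Fin N → ℝ) : Prop :=
  (Finset.univ.filter (fun i => u i ≠ 0)).card ≤ k

/-- RIP implies near-orthogonality: if a linear map `Φ : ℝ^N → ℝ^P` satisfies
the RIP of order `2k` with constant `δ ∈ (0,1)` (norms taken on the vectors of
component norms, i.e. absolute values), then for `k`-sparse `u, v` with
disjoint supports and unit `ℓ²` norm, `⟨|Φu|, |Φv|⟩ ≤ δ·‖u‖₂·‖v‖₂`. -/
theorem rip_inner_product_bound (N P k : ℕ)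
    (Φ : (Fin N → ℝ) →ₗ[ℝ] (Fin P → ℝ)) (δ : ℝ) (hδ0 : 0 < δ) (hδ1 : δ < 1)
    (hRIP : ∀ u v : Fin N → ℝ, IsKSparse k u → IsKSparse k v →
      (1 - δ) * (∑ i, (|u i| - |v i|) ^ 2) ≤ (∑ j, (|Φ u j| - |Φ v j|) ^ 2) ∧
      (∑ j, (|Φ u j| + |Φ v j|) ^ 2) ≤ (1 + δ) * (∑ i, (|u i| + |v i|) ^ 2))
    (u v : Fin N → ℝ) (hu : IsKSparse k u) (hv : IsKSparse k v)
    (hdisj : ∀ i, u i = 0 ∨ v i = 0)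
    (hu1 : Real.sqrt (∑ i, (u i) ^ 2) = 1)
    (hv1 : Real.sqrt (∑ i, (v i) ^ 2) = 1) :
    ∑ j, |Φ u j| * |Φ v j| ≤
      δ * Real.sqrt (∑ i, (u i) ^ 2) * Real.sqrt (∑ i, (v i) ^ 2) := by
  obtain ⟨h1, h2⟩ := hRIP u v hu hv
  have hsu : (∑ i, (u i) ^ 2) = 1 := by
    have hnn : (0:ℝ) ≤ ∑ i, (u i) ^ 2 := Finset.sum_nonneg fun i _ => sq_nonneg (u i)
    have h := Real.sq_sqrt hnn
    rw [hu1] at h; linarith [h]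
  have hsv : (∑ i, (v i) ^ 2) = 1 := by
    have hnn : (0:ℝ) ≤ ∑ i, (v i) ^ 2 := Finset.sum_nonneg fun i _ => sq_nonneg (v i)
    have h := Real.sq_sqrt hnn
    rw [hv1] at h; linarith [h]
  have hcross : ∀ i, |u i| * |v i| = 0 := by
    intro i; rcases hdisj i with h | h <;> simp [h]
  have hplus : (∑ i, (|u i| + |v i|) ^ 2) = 2 := by
    have : (∑ i, (|u i| + |v i|) ^ 2) = ∑ i, ((u i) ^ 2 + (v i) ^ 2) := by
      refine Finset.sum_congr rfl fun i _ => ?_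
      have := hcross i
      have hu2 := sq_abs (u i); have hv2 := sq_abs (v i)
      nlinarith [this]
    rw [this, Finset.sum_add_distrib, hsu, hsv]; norm_num
  have hminus : (∑ i, (|u i| - |v i|) ^ 2) = 2 := by
    have : (∑ i, (|u i| - |v i|) ^ 2) = ∑ i, ((u i) ^ 2 + (v i) ^ 2) := by
      refine Finset.sum_congr rfl fun i _ => ?_
      have := hcross i
      have hu2 := sq_abs (u i); have hv2 := sq_abs (v i)
      nlinarith [this]
    rw [this, Finset.sum_add_distrib, hsu, hsv]; norm_num
  have hid : (∑ j, (|Φ u j| + |Φ v j|) ^ 2) - (∑ j, (|Φ u j| - |Φ v j|) ^ 2)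
      = 4 * ∑ j, |Φ u j| * |Φ v j| := by
    rw [← Finset.sum_sub_distrib, Finset.mul_sum]
    exact Finset.sum_congr rfl fun j _ => by ring
  rw [hu1, hv1]
  rw [hplus] at h2; rw [hminus] at h1
  linarith
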